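/- The Gram operator for the PSC secrecy ensemble is diagonal: with hypothesis-state factors φ_h = Z(y_h) φ for h ∈ F_2^{n-k} (y_h ranging over a complement C^⊤ of C) and φφ† = ρ as above, the operator ΦΦ† = Σ_h φ_h φ_h† = Σ_h Z(y_h) ρ Z(y_h) equals Σ_{v ∈ F_2^n} 2^{n-k} p^{w_H(v)} (1-p)^{n-w_H(v)} |v⟩⟨v|; i.e., averaging the PSC coset state over all cosets of C yields (a scalar multiple of) the diagonal i.i.d. Bernoulli(p) distribution in the computational basis. -/

import Mathlib

open Matrix
open scoped Classical

noncomputable section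

/-- Hamming weight of a binary vector. -/
def hammingWt {ι : Type*} [Fintype ι] (v : ι → ZMod 2) : ℕ :=
  (Finset.univ.filter fun i => v i ≠ 0).card

/-- i.i.d. Bernoulli(p) probability of a vector. -/
def bernP (p : ℝ) (n : ℕ) {ι : Type*} [Fintype ι] (v : ι → ZMod 2) : ℝ :=
  p ^ hammingWt v * (1 - p) ^ (n - hammingWt v)

/-- The vector Z(c_g)|θ⟩^{⊗n} (real amplitudes), with c_g = g·G_C and G_C the
top k rows of the invertible matrix A. -/
def pscVec {k m : ℕ} (θ : ℝ) (A : Matrix (Fin k ⊕ Fin m) (Fin k ⊕ Fin m) (ZMod 2))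
    (g : Fin k → ZMod 2) : ((Fin k ⊕ Fin m) → ZMod 2) → ℝ := fun v =>
  (-1 : ℝ) ^ ((dotProduct (Matrix.vecMul g (A.submatrix Sum.inl id)) v).val) *
    ∏ j, (if v j = 0 then Real.cos (θ / 2) else Real.sin (θ / 2))

/-- The averaged PSC coset state ρ = 2^{-k} ∑_{c ∈ C} Z(c)|θ⟩⟨θ|^{⊗n} Z(c). -/
def rhoPSC {k m : ℕ} (θ : ℝ) (A : Matrix (Fin k ⊕ Fin m) (Fin k ⊕ Fin m) (ZMod 2)) :
    Matrix ((Fin k ⊕ Fin m) → ZMod 2) ((Fin k ⊕ Fin m) → ZMod 2) ℝ :=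
  ((2 : ℝ) ^ k)⁻¹ •
    ∑ g : Fin k → ZMod 2, Matrix.vecMulVec (pscVec θ A g) (pscVec θ A g)

/-- The diagonal sign matrix Z(y). -/
def zDiag {k m : ℕ} (y : (Fin k ⊕ Fin m) → ZMod 2) :
    Matrix ((Fin k ⊕ Fin m) → ZMod 2) ((Fin k ⊕ Fin m) → ZMod 2) ℝ :=
  Matrix.diagonal fun v => (-1 : ℝ) ^ ((dotProduct y v).val)

lemma zmod2_sign_add (a b : ZMod 2) :
    ((-1:ℝ))^((a+b).val) = (-1)^a.val * (-1)^b.val := by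
  rw [ZMod.val_add, ← neg_one_pow_eq_pow_mod_two, pow_add]

lemma zmod2_eq_one {a : ZMod 2} (h : a ≠ 0) : a = 1 := by
  fin_cases a
  · exact absurd rfl h
  · rfl

lemma char_sum {ι : Type*} [Fintype ι] [DecidableEq ι] (w : ι → ZMod 2) :
    ∑ x : ι → ZMod 2, ((-1:ℝ))^((dotProduct x w).val)
      = if w = 0 then (2:ℝ)^(Fintype.card ι) else 0 := by
  split_ifs with hw
  · subst hw
    simp only [dotProduct_zero, ZMod.val_zero, pow_zero, Finset.sum_const,
      nsmul_eq_mul, mul_one, Finset.card_univ]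
    rw [Fintype.card_fun]
    simp
  · obtain ⟨i, hi⟩ := Function.ne_iff.mp hw
    have hi' : w i ≠ 0 := by simpa using hi
    have hwi : w i = 1 := zmod2_eq_one hi'
    set f : (ι → ZMod 2) → ℝ := fun x => ((-1:ℝ))^((dotProduct x w).val) with hf
    have key : ∀ x, f (x + Pi.single i 1) = - f x := by
      intro x
      simp only [hf, add_dotProduct, single_dotProduct, hwi, one_mul,
        zmod2_sign_add, show (1 : ZMod 2).val = 1 from rfl]
      ring
    have h2 : ∑ x : ι → ZMod 2, f x = ∑ x : ι → ZMod 2, f (x + Pi.single i 1) :=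
      (Fintype.sum_equiv (Equiv.addRight (Pi.single i 1)) _ _ (fun x => rfl)).symm
    simp only [key, Finset.sum_neg_distrib] at h2
    linarith

lemma vecMul_decomp {k m : ℕ} (A : Matrix (Fin k ⊕ Fin m) (Fin k ⊕ Fin m) (ZMod 2))
    (g : Fin k → ZMod 2) (h : Fin m → ZMod 2) :
    Matrix.vecMul (Sum.elim g h) A
      = Matrix.vecMul g (A.submatrix Sum.inl id) + Matrix.vecMul h (A.submatrix Sum.inr id) := by
  funext j
  simp [Matrix.vecMul, dotProduct, Fintype.sum_sum_type, Matrix.submatrix_apply]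

lemma sum_vecMul_char (k m : ℕ) (A : Matrix (Fin k ⊕ Fin m) (Fin k ⊕ Fin m) (ZMod 2))
    (hA : IsUnit A) (w : (Fin k ⊕ Fin m) → ZMod 2) :
    ∑ h : Fin m → ZMod 2, ∑ g : Fin k → ZMod 2,
        ((-1:ℝ))^((dotProduct (Matrix.vecMul g (A.submatrix Sum.inl id)) w).val) *
          ((-1:ℝ))^((dotProduct (Matrix.vecMul h (A.submatrix Sum.inr id)) w).val)
      = if w = 0 then (2:ℝ)^(k+m) else 0 := by
  have step1 : ∀ (h : Fin m → ZMod 2) (g : Fin k → ZMod 2),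
      ((-1:ℝ))^((dotProduct (Matrix.vecMul g (A.submatrix Sum.inl id)) w).val) *
        ((-1:ℝ))^((dotProduct (Matrix.vecMul h (A.submatrix Sum.inr id)) w).val)
      = ((-1:ℝ))^((dotProduct (Matrix.vecMul (Sum.elim g h) A) w).val) := by
    intro h g
    rw [vecMul_decomp, add_dotProduct, zmod2_sign_add]
  simp only [step1]
  have step2 : ∑ h : Fin m → ZMod 2, ∑ g : Fin k → ZMod 2,
      ((-1:ℝ))^((dotProduct (Matrix.vecMul (Sum.elim g h) A) w).val)
      = ∑ u : (Fin k ⊕ Fin m) → ZMod 2,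
          ((-1:ℝ))^((dotProduct (Matrix.vecMul u A) w).val) := by
    have e := Fintype.sum_equiv (Equiv.sumArrowEquivProdArrow (Fin k) (Fin m) (ZMod 2))
      (fun u : (Fin k ⊕ Fin m) → ZMod 2 =>
        ((-1:ℝ))^((dotProduct (Matrix.vecMul u A) w).val))
      (fun p : ((Fin k → ZMod 2) × (Fin m → ZMod 2)) =>
        ((-1:ℝ))^((dotProduct (Matrix.vecMul (Sum.elim p.1 p.2) A) w).val))
      (fun u => by
        congr 1
        congr 2
        funext i
        cases i <;> simp [Equiv.sumArrowEquivProdArrow])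
    rw [Fintype.sum_prod_type] at e
    simp only at e
    rw [Finset.sum_comm]
    exact e.symm
  rw [step2]
  have hbij : Function.Bijective (fun u : (Fin k ⊕ Fin m) → ZMod 2 => Matrix.vecMul u A) := by
    obtain ⟨B, hB⟩ := hA.exists_right_inv
    have hB' : B * A = 1 := mul_eq_one_comm.mp hB
    constructor
    · intro u v huv
      have h1 : Matrix.vecMul u A = Matrix.vecMul v A := huv
      have h2 : Matrix.vecMul u (A * B) = Matrix.vecMul v (A * B) := by
        rw [← Matrix.vecMul_vecMul, ← Matrix.vecMul_vecMul, h1]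
      simpa [hB] using h2
    · intro x
      exact ⟨Matrix.vecMul x B, by simp [Matrix.vecMul_vecMul, hB']⟩
  rw [Fintype.sum_bijective _ hbij _
    (fun x => ((-1:ℝ))^((dotProduct x w).val)) (fun u => rfl)]
  rw [char_sum]
  congr 1
  simp

lemma sign_dot_mul {n : Type*} [Fintype n] (a v z : n → ZMod 2) :
    ((-1:ℝ))^((dotProduct a v).val) * ((-1:ℝ))^((dotProduct a z).val)
      = ((-1:ℝ))^((dotProduct a (v+z)).val) := by
  rw [dotProduct_add, zmod2_sign_add]

/-- Averaging the PSC coset state over all cosets of C, via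
conjugation by Z(y_h) for y_h = h G_{C^⊤} ranging over the complement C^⊤,
yields the diagonal i.i.d. Bernoulli(p) distribution scaled by 2^{n-k}:
∑_h Z(y_h) ρ Z(y_h) = diag(2^{n-k} p^{w_H(v)} (1-p)^{n-w_H(v)}). -/
theorem psc_gram_operator_diagonal (k m : ℕ)
    (A : Matrix (Fin k ⊕ Fin m) (Fin k ⊕ Fin m) (ZMod 2)) (hA : IsUnit A)
    (θ p : ℝ) (hθ0 : 0 ≤ θ) (hθ1 : θ ≤ Real.pi / 2)
    (hp : p = (1 - Real.cos θ) / 2) :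
    ∑ h : Fin m → ZMod 2,
        zDiag (Matrix.vecMul h (A.submatrix Sum.inr id)) * rhoPSC θ A *
          zDiag (Matrix.vecMul h (A.submatrix Sum.inr id))
      = Matrix.diagonal (fun v => (2 : ℝ) ^ m * bernP p (k + m) v) := by
  ext v z
  set P : ((Fin k ⊕ Fin m) → ZMod 2) → ℝ :=
    fun v => ∏ j, (if v j = 0 then Real.cos (θ / 2) else Real.sin (θ / 2)) with hP
  have lhs_eq : (∑ h : Fin m → ZMod 2,
        zDiag (Matrix.vecMul h (A.submatrix Sum.inr id)) * rhoPSC θ A *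
          zDiag (Matrix.vecMul h (A.submatrix Sum.inr id))) v z
      = ((2:ℝ)^k)⁻¹ * (P v * P z) *
          ∑ h : Fin m → ZMod 2, ∑ g : Fin k → ZMod 2,
            ((-1:ℝ))^((dotProduct (Matrix.vecMul g (A.submatrix Sum.inl id)) (v+z)).val) *
              ((-1:ℝ))^((dotProduct (Matrix.vecMul h (A.submatrix Sum.inr id)) (v+z)).val) := by
    simp only [Matrix.sum_apply]
    simp only [zDiag, rhoPSC, Matrix.diagonal_mul, Matrix.mul_diagonal, Matrix.smul_apply,
      Matrix.sum_apply, Matrix.vecMulVec_apply, pscVec, smul_eq_mul, hP]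
    simp only [Finset.mul_sum, Finset.sum_mul]
    refine Finset.sum_congr rfl fun h _ => ?_
    refine Finset.sum_congr rfl fun g _ => ?_
    rw [← sign_dot_mul (Matrix.vecMul g (A.submatrix Sum.inl id)) v z,
        ← sign_dot_mul (Matrix.vecMul h (A.submatrix Sum.inr id)) v z]
    ring
  rw [lhs_eq, sum_vecMul_char k m A hA (v+z)]
  have hc2 : Real.cos (θ/2)^2 = 1 - p := by
    have hcs := Real.cos_sq (θ/2)
    rw [show 2*(θ/2) = θ by ring] at hcs
    rw [hcs, hp]; ring
  have hs2 : Real.sin (θ/2)^2 = p := by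
    rw [Real.sin_sq, hc2]; ring
  by_cases hvz : v = z
  · subst hvz
    have h0 : v + v = 0 := by
      funext j; exact CharTwo.add_self_eq_zero (v j)
    rw [h0, if_pos rfl, Matrix.diagonal_apply_eq]
    have hwle : hammingWt v ≤ k + m := by
      unfold hammingWt
      calc (Finset.univ.filter fun i => v i ≠ 0).card ≤ Finset.univ.card :=
            Finset.card_filter_le _ _
        _ = k + m := by simp
    have hcard : (Finset.univ.filter fun i : Fin k ⊕ Fin m => v i = 0).card
        = (k + m) - hammingWt v := by
      have := Finset.card_filter_add_card_filter_not
        (s := (Finset.univ : Finset (Fin k ⊕ Fin m))) (p := fun i => v i = 0)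
      have hcu : (Finset.univ : Finset (Fin k ⊕ Fin m)).card = k + m := by simp
      have hwt : (Finset.univ.filter fun i : Fin k ⊕ Fin m => ¬ v i = 0).card
          = hammingWt v := rfl
      omega
    have hPP : P v * P v = p ^ hammingWt v * (1-p) ^ ((k+m) - hammingWt v) := by
      rw [hP, ← Finset.prod_mul_distrib]
      have heach : ∀ j, ((if v j = 0 then Real.cos (θ / 2) else Real.sin (θ / 2)) *
          if v j = 0 then Real.cos (θ / 2) else Real.sin (θ / 2))
          = if v j = 0 then (1-p) else p := by
        intro j
        by_cases h : v j = 0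
        · simp only [h, if_true, ← pow_two, hc2]
        · simp only [h, if_false, ← pow_two, hs2]
      simp only [heach]
      rw [Finset.prod_ite (fun _ => (1-p)) (fun _ => p), Finset.prod_const,
        Finset.prod_const, hcard]
      have : (Finset.univ.filter fun i : Fin k ⊕ Fin m => ¬ v i = 0).card
          = hammingWt v := rfl
      rw [this]
      ring
    rw [hPP]
    unfold bernP
    have h2k : (2:ℝ)^k ≠ 0 := by positivity
    rw [pow_add]
    field_simp
  · have hne : v + z ≠ 0 := by
      intro h0
      apply hvz
      funext j
      have hj := congrFun h0 j
      simp only [Pi.add_apply, Pi.zero_apply] at hj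
      have : v j = - z j := eq_neg_of_add_eq_zero_left hj
      simpa [CharTwo.neg_eq] using this
    rw [if_neg hne, Matrix.diagonal_apply_ne _ hvz]
    ring


end
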